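/- If ℓ : (0,1] → (0,∞) is non-decreasing and satisfies ∫₀¹ ℓ(r)|log r|/r dr < ∞, then sup_{u∈(0,1]} u^{-ℓ(u)} < ∞. -/

import Mathlib

open MeasureTheory Set

theorem sup_rpow_neg_ell_lt_top (ℓ : ℝ → ℝ)
    (hpos : ∀ r ∈ Ioc (0:ℝ) 1, 0 < ℓ r)
    (hmono : MonotoneOn ℓ (Ioc (0:ℝ) 1))
    (hint : IntegrableOn (fun r => ℓ r * |Real.log r| / r) (Ioc (0:ℝ) 1)) :
    ∃ C : ℝ, ∀ u ∈ Ioc (0:ℝ) 1, u ^ (-(ℓ u)) ≤ C := by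
  set f : ℝ → ℝ := fun r => ℓ r * |Real.log r| / r with hf
  set I : ℝ := ∫ r in Ioc (0:ℝ) 1, f r with hIdef
  have hfnn : ∀ r ∈ Ioc (0:ℝ) 1, 0 ≤ f r := fun r hr =>
    div_nonneg (mul_nonneg (hpos r hr).le (abs_nonneg _)) hr.1.le
  have hI : 0 ≤ I := setIntegral_nonneg measurableSet_Ioc hfnn
  -- key estimate for small u
  have key : ∀ u ∈ Ioc (0:ℝ) 1, u ≤ Real.exp (-1) →
      ℓ u * (-Real.log u) ≤ (8/3) * I := by
    intro u hu hue
    obtain ⟨hu0, hu1⟩ := hu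
    set v := Real.sqrt u with hv
    have hv0 : 0 < v := Real.sqrt_pos.2 hu0
    have hv1 : v ≤ 1 := Real.sqrt_le_one.mpr hu1
    have hsq : v * v = u := Real.mul_self_sqrt hu0.le
    have huv : u ≤ v := by nlinarith [Real.sqrt_nonneg u]
    have hlogv : Real.log v = Real.log u / 2 := Real.log_sqrt hu0.le
    have hlogu : Real.log u ≤ -1 := (Real.log_le_iff_le_exp hu0).2 hue
    -- step 1: the integral over Ioc u v is at most I
    have hsub : Ioc u v ⊆ Ioc (0:ℝ) 1 := fun r hr => ⟨lt_trans hu0 hr.1, hr.2.trans hv1⟩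
    have hfint : IntegrableOn f (Ioc u v) := hint.mono_set hsub
    have step1 : (∫ r in Ioc u v, f r) ≤ I := by
      apply setIntegral_mono_set hint
      · exact (ae_restrict_iff' measurableSet_Ioc).2 (ae_of_all _ hfnn)
      · exact HasSubset.Subset.eventuallyLE hsub
    -- the minorant g
    set g : ℝ → ℝ := fun r => ℓ u * (-Real.log r / r) with hg
    have hne : ∀ r ∈ Set.uIcc u v, r ≠ 0 := by
      intro r hr
      rw [Set.uIcc_of_le huv] at hr
      exact (lt_of_lt_of_le hu0 hr.1).ne'
    have hcont : ContinuousOn (fun r => -Real.log r / r) (Set.uIcc u v) := by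
      apply ContinuousOn.div
      · exact (Real.continuousOn_log.mono (fun r hr => hne r hr)).neg
      · exact continuousOn_id
      · exact hne
    have hgint : IntegrableOn g (Ioc u v) := by
      have h1 : ContinuousOn g (Icc u v) := by
        rw [Set.uIcc_of_le huv] at hcont
        exact continuousOn_const.mul hcont
      exact h1.integrableOn_Icc.mono_set Ioc_subset_Icc_self
    -- step 2: g ≤ f on Ioc u v
    have step2 : (∫ r in Ioc u v, g r) ≤ ∫ r in Ioc u v, f r := by
      apply setIntegral_mono_on hgint hfint measurableSet_Ioc
      intro r hr
      have hr' : r ∈ Ioc (0:ℝ) 1 := hsub hr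
      have hlr : Real.log r ≤ 0 := Real.log_nonpos hr'.1.le hr'.2
      have hml : ℓ u ≤ ℓ r := hmono ⟨hu0, hu1⟩ hr' hr.1.le
      have : -Real.log r = |Real.log r| := (abs_of_nonpos hlr).symm
      simp only [hg, hf]
      rw [this, mul_div_assoc]
      exact mul_le_mul_of_nonneg_right hml (div_nonneg (abs_nonneg _) hr'.1.le)
    -- step 3: compute the integral of g
    have step3 : (∫ r in Ioc u v, g r) = ℓ u * (3/8 * (Real.log u)^2) := by
      rw [← intervalIntegral.integral_of_le huv]
      have : (∫ r in u..v, g r) = ℓ u * ∫ r in u..v, -Real.log r / r := by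
        simp only [hg]
        exact intervalIntegral.integral_const_mul _ _
      rw [this]
      congr 1
      have hderiv : ∀ r ∈ Set.uIcc u v, HasDerivAt (fun x => -(Real.log x)^2/2)
          (-Real.log r / r) r := by
        intro r hr
        have hr0 : r ≠ 0 := hne r hr
        have h := ((Real.hasDerivAt_log hr0).fun_pow 2).fun_neg.div_const 2
        refine h.congr_deriv ?_
        field_simp
        ring
      rw [intervalIntegral.integral_eq_sub_of_hasDerivAt hderiv
        (hcont.intervalIntegrable)]
      rw [hlogv]
      ring
    have hle : ℓ u * (3/8 * (Real.log u)^2) ≤ I := by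
      calc ℓ u * (3/8 * (Real.log u)^2) = ∫ r in Ioc u v, g r := step3.symm
        _ ≤ ∫ r in Ioc u v, f r := step2
        _ ≤ I := step1
    have hlu : 0 < ℓ u := hpos u ⟨hu0, hu1⟩
    nlinarith [hlu.le, hlogu]
  -- conclude
  refine ⟨Real.exp (max ((8/3) * I) (ℓ 1)), ?_⟩
  intro u hu
  obtain ⟨hu0, hu1⟩ := hu
  rw [Real.rpow_def_of_pos hu0]
  apply Real.exp_le_exp.2
  have hrw : Real.log u * (-ℓ u) = ℓ u * (-Real.log u) := by ring
  rw [hrw]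
  by_cases hcase : u ≤ Real.exp (-1)
  · exact le_trans (key u ⟨hu0, hu1⟩ hcase) (le_max_left _ _)
  · push_neg at hcase
    have hlog : -1 < Real.log u := (Real.lt_log_iff_exp_lt hu0).2 hcase
    have hlog2 : Real.log u ≤ 0 := Real.log_nonpos hu0.le hu1
    have hml : ℓ u ≤ ℓ 1 := hmono ⟨hu0, hu1⟩ ⟨one_pos, le_refl 1⟩ hu1
    have : ℓ u * (-Real.log u) ≤ ℓ 1 * 1 :=
      mul_le_mul hml (by linarith) (by linarith) (hpos 1 ⟨one_pos, le_refl 1⟩).le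
    simpa using this.trans (le_max_right _ _)
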